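/- Let r and s be rational numbers that are Farey neighbors with s > r. If either 2 ≤ r < 4 or r ≥ 5, then s > 2 and s does not lie in the interval (4, 5]; in particular, s ≠ (4k+1)/k for every positive integer k. -/
import Mathlib


/-- Let `r` and `s` be rational Farey neighbors (their lowest-terms numerators and
denominators satisfy `|r.num·s.den - s.num·r.den| = 1`) with `s > r`. If either
`2 ≤ r < 4` or `r ≥ 5`, then `s > 2` and `s ∉ (4, 5]`; in particular
`s ≠ (4k+1)/k` for every positive integer `k`. -/
theorem stmt11 (r s : ℚ)
    (hfarey : |r.num * (s.den : ℤ) - s.num * (r.den : ℤ)| = 1)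
    (hrs : r < s)
    (hr : (2 ≤ r ∧ r < 4) ∨ 5 ≤ r) :
    2 < s ∧ ¬(4 < s ∧ s ≤ 5) ∧ ∀ k : ℕ, 0 < k → s ≠ (4 * k + 1) / k := by
  have hq : (0:ℤ) < r.den := by exact_mod_cast r.pos
  have hb : (0:ℤ) < s.den := by exact_mod_cast s.pos
  have hlt : r.num * (s.den:ℤ) < s.num * (r.den:ℤ) := by
    have h := hrs
    rw [← Rat.num_div_den r, ← Rat.num_div_den s,
      div_lt_div_iff₀ (by exact_mod_cast hq) (by exact_mod_cast hb)] at h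
    exact_mod_cast h
  have key : s.num * (r.den:ℤ) = r.num * (s.den:ℤ) + 1 := by
    rcases (abs_eq (by norm_num : (0:ℤ) ≤ 1)).mp hfarey with h | h <;> omega
  have h2r : (2:ℚ) ≤ r := by
    rcases hr with ⟨h, _⟩ | h
    · exact h
    · linarith
  have h2s : 2 < s := lt_of_le_of_lt h2r hrs
  have hmain : ¬(4 < s ∧ s ≤ 5) := by
    rintro ⟨h4, h5⟩
    rcases hr with ⟨_, hr4⟩ | hr5
    · have ha : 4 * (s.den:ℤ) < s.num := by
        have h4' : (4:ℚ) * (s.den:ℚ) < (s.num:ℚ) := by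
          rw [← Rat.num_div_den s] at h4
          rw [lt_div_iff₀ (by exact_mod_cast hb)] at h4
          linarith
        exact_mod_cast h4'
      have hp : r.num < 4 * (r.den:ℤ) := by
        have hp' : (r.num:ℚ) < 4 * (r.den:ℚ) := by
          rw [← Rat.num_div_den r] at hr4
          rw [div_lt_iff₀ (by exact_mod_cast hq)] at hr4
          linarith
        exact_mod_cast hp'
      nlinarith [mul_le_mul_of_nonneg_right (by omega : 4 * (s.den:ℤ) + 1 ≤ s.num) hq.le,
        mul_le_mul_of_nonneg_right (by omega : r.num ≤ 4 * (r.den:ℤ) - 1) hb.le]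
    · linarith
  refine ⟨h2s, hmain, ?_⟩
  intro k hk heq
  have hk' : (0:ℚ) < (k:ℚ) := by exact_mod_cast hk
  apply hmain
  constructor
  · rw [heq, lt_div_iff₀ hk']; nlinarith
  · rw [heq, div_le_iff₀ hk']
    have : (1:ℚ) ≤ (k:ℚ) := by exact_mod_cast hk
    nlinarith
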